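/- Let X and K be finite sets with L := |X|/|K| a positive integer, and let Z be a finite set. Let P_X be the uniform distribution on X, P_{Z|X} a channel from X to Z, and P_Z(z) := Σ_{x∈X} P_X(x)·P_{Z|X}(z|x). Then there exists a function g : X → K with |g⁻¹(k)| = L for every k ∈ K such that max_{k∈K} d(P_{Z|g⁻¹(k)}, P_Z) ≤ μ + √( log(|K|+1) / (2L) ), where μ := E[ d(P_{Z|𝒜}, P_Z) ] with 𝒜 = (X̄₁,...,X̄_L) a tuple of i.i.d. P_X-distributed random variables and P_{Z|𝒜}(z) := (1/L)·Σ_{i=1}^{L} P_{Z|X}(z|X̄ᵢ). -/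

import Mathlib

open Finset

noncomputable section

/-- Total variation distance between two finitely supported distributions. -/
def tv {A : Type*} [Fintype A] (P Q : A → ℝ) : ℝ := (1 / 2) * ∑ a, |P a - Q a|

section Auxiliary

set_option linter.unusedSectionVars false

private lemma quarter_aux (a b : ℝ) (hab : 0 < b + a) : 0 ≤ 1 / 4 - a * b / (b + a) ^ 2 := by
  have hD2 : (0:ℝ) < (b + a) ^ 2 := pow_pos hab 2
  rw [sub_nonneg, div_le_iff₀ hD2]
  nlinarith [sq_nonneg (b - a)]

lemma hoeffding_kernel {p : ℝ} (hp0 : 0 ≤ p) (hp1 : p ≤ 1) (h : ℝ) :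
    1 - p + p * Real.exp h ≤ Real.exp (p * h + h ^ 2 / 8) := by
  set q : ℝ := 1 - p with hq
  have hq0 : 0 ≤ q := by simp [hq]; linarith
  have hD : ∀ x : ℝ, 0 < q + p * Real.exp x := by
    intro x
    rcases eq_or_lt_of_le hp0 with h0 | h0
    · simp [← h0, hq]
    · have := Real.exp_pos x
      nlinarith
  -- u x = p x + x^2/8 - log (q + p e^x)
  set u : ℝ → ℝ := fun x => p * x + x ^ 2 / 8 - Real.log (q + p * Real.exp x) with hu
  set g : ℝ → ℝ := fun x => p + x / 4 - p * Real.exp x / (q + p * Real.exp x) with hg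
  have hDdiff : ∀ x : ℝ, HasDerivAt (fun y => q + p * Real.exp y) (p * Real.exp x) x := by
    intro x
    simpa using ((Real.hasDerivAt_exp x).const_mul p).const_add q
  have hu' : ∀ x : ℝ, HasDerivAt u (g x) x := by
    intro x
    have h1 : HasDerivAt (fun y : ℝ => p * y + y ^ 2 / 8) (p + x * 2 / 8) x := by
      have := ((hasDerivAt_id x).const_mul p).fun_add
        (((hasDerivAt_pow 2 x)).div_const 8)
      simpa [mul_comm] using this
    have h2 : HasDerivAt (fun y => Real.log (q + p * Real.exp y))
        (p * Real.exp x / (q + p * Real.exp x)) x :=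
      (hDdiff x).log (hD x).ne'
    have := h1.fun_sub h2
    refine this.congr_deriv ?_
    ring
  have hg' : ∀ x : ℝ, HasDerivAt g
      (1 / 4 - p * Real.exp x * q / (q + p * Real.exp x) ^ 2) x := by
    intro x
    have h1 : HasDerivAt (fun y : ℝ => p + y / 4) (1 / 4) x := by
      simpa using ((hasDerivAt_id x).div_const 4).const_add p
    have h2 : HasDerivAt (fun y => p * Real.exp y / (q + p * Real.exp y))
        ((p * Real.exp x * (q + p * Real.exp x) - p * Real.exp x * (p * Real.exp x)) /
          (q + p * Real.exp x) ^ 2) x :=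
      ((Real.hasDerivAt_exp x).const_mul p).div (hDdiff x) (hD x).ne'
    have := h1.fun_sub h2
    refine this.congr_deriv ?_
    field_simp
    ring
  have hg'_nonneg : ∀ x : ℝ, 0 ≤ 1 / 4 - p * Real.exp x * q / (q + p * Real.exp x) ^ 2 :=
    fun x => quarter_aux (p * Real.exp x) q (hD x)
  have hgmono : Monotone g := by
    refine monotone_of_deriv_nonneg (fun x => (hg' x).differentiableAt) ?_
    intro x
    rw [(hg' x).deriv]
    exact hg'_nonneg x
  have hg0 : g 0 = 0 := by
    simp [hg, hq]
  have hu0 : u 0 = 0 := by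
    simp [hu, hq]
  have hukey : ∀ x : ℝ, 0 ≤ u x := by
    intro x
    have hudiff : Differentiable ℝ u := fun x => (hu' x).differentiableAt
    rcases le_or_gt 0 x with hx | hx
    · have : MonotoneOn u (Set.Ici 0) := by
        refine monotoneOn_of_deriv_nonneg (convex_Ici 0) hudiff.continuous.continuousOn
          (hudiff.differentiableOn) ?_
        intro y hy
        rw [(hu' y).deriv, ← hg0]
        exact hgmono (le_of_lt (by simpa using hy))
      have := this (Set.mem_Ici.mpr le_rfl) (Set.mem_Ici.mpr hx) hx
      rwa [hu0] at this
    · have : AntitoneOn u (Set.Iic 0) := by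
        refine antitoneOn_of_deriv_nonpos (convex_Iic 0) hudiff.continuous.continuousOn
          (hudiff.differentiableOn) ?_
        intro y hy
        rw [(hu' y).deriv, ← hg0]
        exact hgmono (le_of_lt (by simpa using hy))
      have := this (Set.mem_Iic.mpr hx.le) (Set.mem_Iic.mpr le_rfl) hx.le
      rwa [hu0] at this
  have := hukey h
  have hlog : Real.log (q + p * Real.exp h) ≤ p * h + h ^ 2 / 8 := by
    simp only [hu] at this
    linarith
  have := (Real.log_le_iff_le_exp (hD h)).mp hlog
  simpa [hq] using this

/-- Hoeffding's lemma for the uniform distribution on a finite nonempty set. -/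
lemma finite_hoeffding {α : Type*} (s : Finset α) (hs : s.Nonempty)
    (F : α → ℝ) (c l : ℝ) (hc : 0 ≤ c)
    (hdiff : ∀ a ∈ s, ∀ b ∈ s, |F a - F b| ≤ c) :
    ∑ a ∈ s, Real.exp (l * (F a - (s.card : ℝ)⁻¹ * ∑ b ∈ s, F b))
      ≤ s.card * Real.exp (l ^ 2 * c ^ 2 / 8) := by
  classical
  have hcard0 : (0:ℝ) < s.card := by exact_mod_cast card_pos.mpr hs
  set M : ℝ := (s.card : ℝ)⁻¹ * ∑ b ∈ s, F b with hM
  have ht : (s.image F).Nonempty := hs.image F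
  set mn := (s.image F).min' ht with hmn
  set mx := (s.image F).max' ht with hmx
  obtain ⟨a₀, ha₀s, ha₀⟩ := mem_image.mp ((s.image F).min'_mem ht)
  obtain ⟨b₀, hb₀s, hb₀⟩ := mem_image.mp ((s.image F).max'_mem ht)
  have hlb : ∀ a ∈ s, mn ≤ F a := fun a ha => min'_le _ _ (mem_image_of_mem F ha)
  have hub : ∀ a ∈ s, F a ≤ mx := fun a ha => le_max' _ _ (mem_image_of_mem F ha)
  have hlen : mx - mn ≤ c := by
    have := hdiff b₀ hb₀s a₀ ha₀s
    rw [ha₀, hb₀] at this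
    have := abs_le.mp this
    linarith [this.2]
  have hmnmx : mn ≤ mx := le_trans (hlb a₀ ha₀s) (hub a₀ ha₀s)
  have hsum_lb : (s.card : ℝ) * mn ≤ ∑ b ∈ s, F b := by
    calc (s.card : ℝ) * mn = ∑ _b ∈ s, mn := by rw [sum_const, nsmul_eq_mul]
    _ ≤ ∑ b ∈ s, F b := sum_le_sum hlb
  have hsum_ub : ∑ b ∈ s, F b ≤ (s.card : ℝ) * mx := by
    calc ∑ b ∈ s, F b ≤ ∑ _b ∈ s, mx := sum_le_sum hub
    _ = (s.card : ℝ) * mx := by rw [sum_const, nsmul_eq_mul]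
  have hMlb : mn ≤ M := by
    rw [hM, le_inv_mul_iff₀ hcard0]
    linarith
  have hMub : M ≤ mx := by
    rw [hM, inv_mul_le_iff₀ hcard0]
    linarith
  have hexp1 : (1:ℝ) ≤ Real.exp (l ^ 2 * c ^ 2 / 8) := Real.one_le_exp (by positivity)
  rcases eq_or_lt_of_le hmnmx with heq | hlt
  · -- all values equal to M
    have hMeq : M = mn := le_antisymm (heq ▸ hMub) hMlb
    have hall : ∀ a ∈ s, F a = M := by
      intro a ha
      have h2 := hub a ha
      rw [← heq] at h2
      rw [hMeq]
      exact le_antisymm h2 (hlb a ha)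
    calc ∑ a ∈ s, Real.exp (l * (F a - M)) = ∑ a ∈ s, 1 := by
          apply sum_congr rfl
          intro a ha
          rw [hall a ha]
          simp
    _ = (s.card : ℝ) := by simp
    _ ≤ s.card * Real.exp (l ^ 2 * c ^ 2 / 8) := by
          nlinarith
  · -- nondegenerate case
    set d : ℝ := mx - mn with hd
    have hd0 : 0 < d := by simp [hd]; linarith
    set p : ℝ := (M - mn) / d with hp
    have hp0 : 0 ≤ p := div_nonneg (by linarith) hd0.le
    have hp1 : p ≤ 1 := by rw [hp, div_le_one hd0]; linarith
    set h : ℝ := l * d with hh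
    have hSF : ∑ b ∈ s, F b = (s.card:ℝ) * M := by rw [hM]; field_simp
    have hpoint : ∀ a ∈ s, Real.exp (l * (F a - M)) ≤
        (mx - F a) / d * Real.exp (l * (mn - M)) + (F a - mn) / d * Real.exp (l * (mx - M)) := by
      intro a ha
      have hθ0 : 0 ≤ (mx - F a) / d := div_nonneg (by linarith [hub a ha]) hd0.le
      have hη0 : 0 ≤ (F a - mn) / d := div_nonneg (by linarith [hlb a ha]) hd0.le
      have hsum1 : (mx - F a) / d + (F a - mn) / d = 1 := by
        rw [← add_div, hd]
        field_simp
        ring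
      have hconv := convexOn_exp.2 (Set.mem_univ (l * (mn - M))) (Set.mem_univ (l * (mx - M)))
        hθ0 hη0 hsum1
      simp only [smul_eq_mul] at hconv
      have harg : (mx - F a) / d * (l * (mn - M)) + (F a - mn) / d * (l * (mx - M))
          = l * (F a - M) := by
        rw [hd]
        field_simp
        ring
      rwa [harg] at hconv
    have h1 : ∑ a ∈ s, (mx - F a) / d = (s.card:ℝ) * (1 - p) := by
      rw [← sum_div, sum_sub_distrib, sum_const, nsmul_eq_mul, hSF, hp]
      rw [div_eq_iff hd0.ne', mul_assoc, sub_mul, one_mul, div_mul_cancel₀ _ hd0.ne', hd]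
      ring
    have h2 : ∑ a ∈ s, (F a - mn) / d = (s.card:ℝ) * p := by
      rw [← sum_div, sum_sub_distrib, sum_const, nsmul_eq_mul, hSF, hp]
      rw [div_eq_iff hd0.ne', mul_assoc, div_mul_cancel₀ _ hd0.ne']
      ring
    have hsums : ∑ a ∈ s, ((mx - F a) / d * Real.exp (l * (mn - M))
          + (F a - mn) / d * Real.exp (l * (mx - M)))
        = (s.card:ℝ) * ((1 - p) * Real.exp (l * (mn - M)) + p * Real.exp (l * (mx - M))) := by
      rw [sum_add_distrib, ← sum_mul, ← sum_mul, h1, h2]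
      ring
    have hkey : (1 - p) * Real.exp (l * (mn - M)) + p * Real.exp (l * (mx - M))
        ≤ Real.exp (l ^ 2 * c ^ 2 / 8) := by
      have hmnM : l * (mn - M) = -(p * h) := by
        rw [hh, hp]
        field_simp
        ring
      have hmxM : l * (mx - M) = -(p * h) + h := by
        rw [hh, hp]
        field_simp
        ring
      rw [hmnM, hmxM]
      calc (1 - p) * Real.exp (-(p * h)) + p * Real.exp (-(p * h) + h)
          = Real.exp (-(p * h)) * (1 - p + p * Real.exp h) := by rw [Real.exp_add]; ring
        _ ≤ Real.exp (-(p * h)) * Real.exp (p * h + h ^ 2 / 8) :=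
            mul_le_mul_of_nonneg_left (hoeffding_kernel hp0 hp1 h) (Real.exp_nonneg _)
        _ = Real.exp (h ^ 2 / 8) := by rw [← Real.exp_add]; ring_nf
        _ ≤ Real.exp (l ^ 2 * c ^ 2 / 8) := by
            apply Real.exp_le_exp.mpr
            have hdc : d ^ 2 ≤ c ^ 2 := by nlinarith
            have : h ^ 2 ≤ l ^ 2 * c ^ 2 := by
              rw [hh, mul_pow]
              nlinarith [sq_nonneg l]
            linarith
    calc ∑ a ∈ s, Real.exp (l * (F a - M))
        ≤ ∑ a ∈ s, ((mx - F a) / d * Real.exp (l * (mn - M))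
            + (F a - mn) / d * Real.exp (l * (mx - M))) := sum_le_sum hpoint
      _ = (s.card:ℝ) * ((1 - p) * Real.exp (l * (mn - M)) + p * Real.exp (l * (mx - M))) := hsums
      _ ≤ (s.card:ℝ) * Real.exp (l ^ 2 * c ^ 2 / 8) := mul_le_mul_of_nonneg_left hkey hcard0.le

variable {X : Type*} [Fintype X] [DecidableEq X]

/-- Injective `n`-tuples with values in `T`. -/
def IT (X : Type*) [Fintype X] [DecidableEq X] (n : ℕ) (T : Finset X) : Finset (Fin n → X) :=
  univ.filter (fun v => Function.Injective v ∧ ∀ i, v i ∈ T)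

lemma mem_IT {n : ℕ} {T : Finset X} {v : Fin n → X} :
    v ∈ IT X n T ↔ Function.Injective v ∧ ∀ i, v i ∈ T := by
  simp [IT]

lemma IT_sum_decomp {M : Type*} [AddCommMonoid M] (n : ℕ) (T : Finset X)
    (G : (Fin (n + 1) → X) → M) :
    ∑ v ∈ IT X (n+1) T, G v = ∑ x ∈ T, ∑ w ∈ IT X n (T.erase x), G (Fin.cons x w) := by
  classical
  rw [← Finset.sum_sigma (T) (fun x => IT X n (T.erase x)) (fun p => G (Fin.cons p.1 p.2))]
  refine Finset.sum_nbij' (i := fun v => (⟨v 0, Fin.tail v⟩ : Σ _x : X, Fin n → X))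
    (j := fun p => Fin.cons p.1 p.2) ?_ ?_ ?_ ?_ ?_
  · intro v hv
    rw [mem_IT] at hv
    obtain ⟨hinj, hmem⟩ := hv
    rw [Finset.mem_sigma]
    refine ⟨hmem 0, ?_⟩
    rw [mem_IT]
    constructor
    · intro a b hab
      exact Fin.succ_injective n (hinj hab)
    · intro i
      rw [Finset.mem_erase]
      exact ⟨fun h => (Fin.succ_ne_zero i) (hinj h), hmem _⟩
  · intro p hp
    rw [Finset.mem_sigma] at hp
    obtain ⟨hp1, hp2⟩ := hp
    rw [mem_IT] at hp2 ⊢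
    obtain ⟨hinj, hmem⟩ := hp2
    constructor
    · rw [Fin.cons_injective_iff]
      refine ⟨?_, hinj⟩
      rintro ⟨i, hi⟩
      have := hmem i
      rw [hi] at this
      exact (Finset.ne_of_mem_erase this) rfl
    · intro i
      refine Fin.cases ?_ ?_ i
      · simpa using hp1
      · intro k
        simpa using Finset.mem_of_mem_erase (hmem k)
  · intro v hv
    exact Fin.cons_self_tail v
  · intro p hp
    ext
    · simp
    · simp [Fin.tail_cons]
  · intro v hv
    rw [Fin.cons_self_tail]

lemma IT_card (n : ℕ) (T : Finset X) : (IT X n T).card = T.card.descFactorial n := by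
  classical
  induction n generalizing T with
  | zero =>
      have h1 : (IT X 0 T) = univ := by
        ext v
        simp only [mem_IT, mem_univ, iff_true]
        exact ⟨fun a => a.elim0, fun i => i.elim0⟩
      rw [h1]
      simp [Finset.card_univ]
  | succ n ih =>
      have := IT_sum_decomp (X := X) n T (fun _ => (1 : ℕ))
      simp only [Finset.sum_const, smul_eq_mul, mul_one] at this
      rw [this]
      have h2 : ∀ x ∈ T, (IT X n (T.erase x)).card = (T.card - 1).descFactorial n := by
        intro x hx
        rw [ih, Finset.card_erase_of_mem hx]
      rw [Finset.sum_congr rfl h2, Finset.sum_const, smul_eq_mul]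
      rcases Nat.eq_zero_or_pos T.card with h0 | hpos
      · rw [h0]
        rw [Finset.card_eq_zero] at h0
        simp [h0]
      · obtain ⟨m, hm⟩ := Nat.exists_eq_add_of_lt hpos
        rw [hm] at *
        simp only [Nat.add_sub_cancel, zero_add] at *
        rw [Nat.succ_descFactorial_succ]

lemma IT_nonempty {n : ℕ} {T : Finset X} (h : n ≤ T.card) : (IT X n T).Nonempty := by
  rw [← Finset.card_pos, IT_card]
  rcases Nat.lt_or_ge T.card n with hlt | hge
  · omega
  · have := Nat.descFactorial_eq_zero_iff_lt (n := T.card) (k := n)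
    omega

/-- Lift a permutation of `Fin n` to `Fin (n+1)` fixing `0`. -/
def liftPerm (n : ℕ) (π : Equiv.Perm (Fin n)) : Equiv.Perm (Fin (n + 1)) :=
  ((finSuccEquiv n).trans (Equiv.optionCongr π)).trans (finSuccEquiv n).symm

lemma cons_comp_liftPerm (n : ℕ) (x : X) (w : Fin n → X) (π : Equiv.Perm (Fin n)) :
    Fin.cons x (w ∘ π) = (Fin.cons x w) ∘ (liftPerm n π) := by
  funext i
  refine Fin.cases ?_ ?_ i
  · simp [liftPerm]
  · intro k
    simp [liftPerm]

set_option maxHeartbeats 1000000 in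
lemma mgf_IT (c l : ℝ) (hc : 0 ≤ c) :
    ∀ (n : ℕ) (T : Finset X), n ≤ T.card →
    ∀ (F : (Fin n → X) → ℝ),
    (∀ (v : Fin n → X) (π : Equiv.Perm (Fin n)), F (v ∘ π) = F v) →
    (∀ (v : Fin n → X) (i : Fin n) (x : X), |F v - F (Function.update v i x)| ≤ c) →
    ∑ v ∈ IT X n T, Real.exp (l * (F v - ((IT X n T).card : ℝ)⁻¹ * ∑ w ∈ IT X n T, F w))
      ≤ (IT X n T).card * Real.exp (n * (l ^ 2 * c ^ 2 / 8)) := by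
  intro n
  induction n with
  | zero =>
      intro T hT F hsym hlip
      have h1 : (IT X 0 T) = univ := by
        ext v
        simp only [mem_IT, mem_univ, iff_true]
        exact ⟨fun a => a.elim0, fun i => i.elim0⟩
      rw [h1]
      rw [Fintype.sum_unique, Fintype.sum_unique, Finset.card_univ, Fintype.card_unique]
      simp
  | succ n ih =>
      intro T hT F hsym hlip
      have hTpos : 0 < T.card := lt_of_lt_of_le (Nat.succ_pos n) hT
      set J : ℕ := (T.card - 1).descFactorial n with hJ
      have hJx : ∀ x ∈ T, (IT X n (T.erase x)).card = J := by
        intro x hx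
        rw [IT_card, Finset.card_erase_of_mem hx]
      have hJpos : 0 < J := by
        rw [hJ]
        have := Nat.descFactorial_eq_zero_iff_lt (n := T.card - 1) (k := n)
        omega
      have hcards : (IT X (n+1) T).card = T.card * J := by
        rw [IT_card, hJ]
        obtain ⟨m, hm⟩ := Nat.exists_eq_add_of_lt hTpos
        rw [hm]
        simp only [Nat.add_sub_cancel, zero_add]
        rw [Nat.succ_descFactorial_succ]
      set H : X → ℝ := fun x => (J : ℝ)⁻¹ * ∑ w ∈ IT X n (T.erase x), F (Fin.cons x w) with hH
      set M : ℝ := ((IT X (n+1) T).card : ℝ)⁻¹ * ∑ v ∈ IT X (n+1) T, F v with hM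
      have hsumH : ∑ x ∈ T, H x = (J : ℝ)⁻¹ * ∑ v ∈ IT X (n+1) T, F v := by
        rw [IT_sum_decomp n T F, Finset.mul_sum]
      have hMH : M = (T.card : ℝ)⁻¹ * ∑ x ∈ T, H x := by
        rw [hM, hsumH, hcards]
        push_cast
        rw [mul_inv]
        ring
      -- the erased sets have enough room
      have hT' : ∀ x ∈ T, n ≤ (T.erase x).card := by
        intro x hx
        rw [Finset.card_erase_of_mem hx]
        omega
      -- per-x hypotheses for the IH
      have hIH : ∀ x ∈ T,
          ∑ w ∈ IT X n (T.erase x), Real.exp (l * (F (Fin.cons x w) - H x))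
            ≤ (J : ℝ) * Real.exp (n * (l ^ 2 * c ^ 2 / 8)) := by
        intro x hx
        have hsym' : ∀ (w : Fin n → X) (π : Equiv.Perm (Fin n)),
            F (Fin.cons x (w ∘ π)) = F (Fin.cons x w) := by
          intro w π
          rw [cons_comp_liftPerm, hsym]
        have hlip' : ∀ (w : Fin n → X) (i : Fin n) (y : X),
            |F (Fin.cons x w) - F (Fin.cons x (Function.update w i y))| ≤ c := by
          intro w i y
          rw [Fin.cons_update]
          exact hlip _ _ _
        have := ih (T.erase x) (hT' x hx) (fun w => F (Fin.cons x w)) hsym' hlip'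
        rw [hJx x hx] at this
        exact this
      -- bounded differences of H
      have hHdiff : ∀ x ∈ T, ∀ y ∈ T, |H x - H y| ≤ c := by
        intro x hx y hy
        rcases eq_or_ne x y with rfl | hxy
        · simpa using hc
        set σ := Equiv.swap x y with hσ
        have hreindex : ∑ w ∈ IT X n (T.erase y), F (Fin.cons y w)
            = ∑ w ∈ IT X n (T.erase x), F (Fin.cons y (σ ∘ w)) := by
          refine (Finset.sum_nbij' (i := fun w => σ ∘ w) (j := fun w => σ ∘ w) ?_ ?_ ?_ ?_ ?_).symm
          · intro w hw
            rw [mem_IT] at hw ⊢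
            obtain ⟨hinj, hmem⟩ := hw
            refine ⟨σ.injective.comp hinj, ?_⟩
            intro i
            have hi := hmem i
            rw [Finset.mem_erase] at hi ⊢
            simp only [Function.comp_apply]
            rcases eq_or_ne (w i) y with hwy | hwy
            · rw [hwy, hσ, Equiv.swap_apply_right]
              exact ⟨hxy, hx⟩
            · rw [hσ, Equiv.swap_apply_of_ne_of_ne hi.1 hwy]
              exact ⟨hwy, hi.2⟩
          · intro w hw
            rw [mem_IT] at hw ⊢
            obtain ⟨hinj, hmem⟩ := hw
            refine ⟨σ.injective.comp hinj, ?_⟩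
            intro i
            have hi := hmem i
            rw [Finset.mem_erase] at hi ⊢
            simp only [Function.comp_apply]
            rcases eq_or_ne (w i) x with hwy | hwy
            · rw [hwy, hσ, Equiv.swap_apply_left]
              exact ⟨Ne.symm hxy, hy⟩
            · rw [hσ, Equiv.swap_apply_of_ne_of_ne hwy hi.1]
              exact ⟨hwy, hi.2⟩
          · intro w hw
            funext i
            simp [hσ]
          · intro w hw
            funext i
            simp [hσ]
          · intro w hw
            rfl
        have hpt : ∀ w ∈ IT X n (T.erase x),
            |F (Fin.cons x w) - F (Fin.cons y (σ ∘ w))| ≤ c := by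
          intro w hw
          rw [mem_IT] at hw
          obtain ⟨hinj, hmem⟩ := hw
          by_cases hcase : ∃ j, w j = y
          · obtain ⟨j, hj⟩ := hcase
            have heq : Fin.cons y (σ ∘ w) = (Fin.cons x w) ∘ (Equiv.swap 0 j.succ) := by
              funext i
              refine Fin.cases ?_ ?_ i
              · rw [Function.comp_apply, Equiv.swap_apply_left]
                simp [hj]
              · intro k
                rcases eq_or_ne k j with rfl | hkj
                · rw [Function.comp_apply, Equiv.swap_apply_right]
                  simp [hσ, hj]
                · have h1 : (Equiv.swap (0 : Fin (n+1)) j.succ) k.succ = k.succ := by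
                    apply Equiv.swap_apply_of_ne_of_ne (Fin.succ_ne_zero k)
                    exact fun h => hkj (Fin.succ_injective n h)
                  rw [Function.comp_apply, h1]
                  have hwk : w k ≠ y := fun h => hkj (hinj (h.trans hj.symm))
                  have hwkx : w k ≠ x := Finset.ne_of_mem_erase (hmem k)
                  simp [hσ, Equiv.swap_apply_of_ne_of_ne hwkx hwk]
            rw [heq, hsym]
            simpa using hc
          · push_neg at hcase
            have hww : σ ∘ w = w := by
              funext i
              exact Equiv.swap_apply_of_ne_of_ne (Finset.ne_of_mem_erase (hmem i)) (hcase i)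
            rw [hww]
            have h0 : Function.update (Fin.cons x w : Fin (n+1) → X) 0 y
                = (Fin.cons y w : Fin (n+1) → X) := by
              funext i
              refine Fin.cases ?_ ?_ i
              · simp
              · intro k
                rw [Function.update_of_ne (Fin.succ_ne_zero k)]
                simp
            rw [← h0]
            exact hlip _ _ _
        -- now the averages differ by at most c
        simp only [hH]
        have hJR : (0:ℝ) < (J : ℝ) := by exact_mod_cast hJpos
        rw [hreindex, ← mul_sub, ← Finset.sum_sub_distrib, abs_mul, abs_inv, abs_of_pos hJR]
        rw [inv_mul_le_iff₀ hJR]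
        calc |∑ w ∈ IT X n (T.erase x), (F (Fin.cons x w) - F (Fin.cons y (σ ∘ w)))|
            ≤ ∑ w ∈ IT X n (T.erase x), |F (Fin.cons x w) - F (Fin.cons y (σ ∘ w))| :=
              Finset.abs_sum_le_sum_abs _ _
          _ ≤ ∑ _w ∈ IT X n (T.erase x), c := Finset.sum_le_sum hpt
          _ = (J:ℝ) * c := by rw [Finset.sum_const, hJx x hx, nsmul_eq_mul]
      -- Hoeffding step over x ∈ T
      have hhoeff := finite_hoeffding T (Finset.card_pos.mp hTpos) H c l hc hHdiff
      rw [← hMH] at hhoeff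
      -- final assembly
      have hfinal : ∑ v ∈ IT X (n+1) T, Real.exp (l * (F v - M))
          = ∑ x ∈ T, Real.exp (l * (H x - M)) *
              ∑ w ∈ IT X n (T.erase x), Real.exp (l * (F (Fin.cons x w) - H x)) := by
        rw [IT_sum_decomp n T (fun v => Real.exp (l * (F v - M)))]
        apply Finset.sum_congr rfl
        intro x hx
        rw [Finset.mul_sum]
        apply Finset.sum_congr rfl
        intro w hw
        rw [← Real.exp_add]
        congr 1
        ring
      rw [hfinal]
      have hstep : ∑ x ∈ T, Real.exp (l * (H x - M)) *
              ∑ w ∈ IT X n (T.erase x), Real.exp (l * (F (Fin.cons x w) - H x))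
          ≤ ∑ x ∈ T, Real.exp (l * (H x - M)) * ((J : ℝ) * Real.exp (n * (l ^ 2 * c ^ 2 / 8))) := by
        apply Finset.sum_le_sum
        intro x hx
        exact mul_le_mul_of_nonneg_left (hIH x hx) (Real.exp_nonneg _)
      refine le_trans hstep ?_
      rw [← Finset.sum_mul]
      calc (∑ x ∈ T, Real.exp (l * (H x - M))) * ((J : ℝ) * Real.exp (n * (l ^ 2 * c ^ 2 / 8)))
          ≤ ((T.card : ℝ) * Real.exp (l ^ 2 * c ^ 2 / 8)) * ((J : ℝ) * Real.exp (n * (l ^ 2 * c ^ 2 / 8))) := by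
            apply mul_le_mul_of_nonneg_right hhoeff
            positivity
        _ = ((IT X (n+1) T).card : ℝ) * Real.exp ((n + 1 : ℕ) * (l ^ 2 * c ^ 2 / 8)) := by
            rw [mul_mul_mul_comm, ← Real.exp_add, hcards]
            push_cast
            have harg : l ^ 2 * c ^ 2 / 8 + (n:ℝ) * (l ^ 2 * c ^ 2 / 8)
                = ((n:ℝ) + 1) * (l ^ 2 * c ^ 2 / 8) := by ring
            rw [harg]

variable {X : Type*} [Fintype X] [DecidableEq X]

/-- Two tuples with the same equality pattern are related by a permutation of `X`. -/
lemma exists_perm_comp {ι : Type*} [Fintype ι] (v v' : ι → X)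
    (hpat : ∀ i j, v i = v j ↔ v' i = v' j) :
    ∃ σ : Equiv.Perm X, ∀ i, σ (v i) = v' i := by
  classical
  set s : Finset X := univ.image v with hs
  set s' : Finset X := univ.image v' with hs'
  -- the forward map on the image
  have hmem : ∀ y : X, y ∈ s → ∃ i, v i = y := by
    intro y hy
    simpa [hs, eq_comm] using Finset.mem_image.mp hy
  have hmem' : ∀ y : X, y ∈ s' → ∃ i, v' i = y := by
    intro y hy
    simpa [hs', eq_comm] using Finset.mem_image.mp hy
  let ψ : {y // y ∈ s} → {y // y ∈ s'} := fun y =>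
    ⟨v' (hmem y.1 y.2).choose, by
      rw [hs']
      exact Finset.mem_image_of_mem v' (mem_univ _)⟩
  have hψv : ∀ (i : ι) (h : v i ∈ s), (ψ ⟨v i, h⟩ : X) = v' i := by
    intro i h
    have hch := (hmem (v i) h).choose_spec
    exact (hpat _ i).mp hch
  have hψinj : Function.Injective ψ := by
    rintro ⟨y, hy⟩ ⟨z, hz⟩ h
    have h1 := (hmem y hy).choose_spec
    have h2 := (hmem z hz).choose_spec
    have : v' ((hmem y hy).choose) = v' ((hmem z hz).choose) := by
      simpa [ψ] using congrArg Subtype.val h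
    have := (hpat _ _).mpr this
    rw [h1, h2] at this
    exact Subtype.ext this
  have hψsurj : Function.Surjective ψ := by
    rintro ⟨y, hy⟩
    obtain ⟨i, hi⟩ := hmem' y hy
    have hvi : v i ∈ s := by
      rw [hs]
      exact Finset.mem_image_of_mem v (mem_univ _)
    refine ⟨⟨v i, hvi⟩, ?_⟩
    apply Subtype.ext
    rw [hψv i hvi, hi]
  have hψbij : Function.Bijective ψ := ⟨hψinj, hψsurj⟩
  let e₁ : {y // y ∈ s} ≃ {y // y ∈ s'} := Equiv.ofBijective ψ hψbij
  -- cardinalities of complements agree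
  have hcard : s.card = s'.card := by
    have := Fintype.card_congr e₁
    simpa using this
  have hcardc : sᶜ.card = s'ᶜ.card := by
    rw [Finset.card_compl, Finset.card_compl, hcard]
  let e₂ : {y // y ∈ sᶜ} ≃ {y // y ∈ s'ᶜ} := Finset.equivOfCardEq hcardc
  -- now build the permutation
  let E : ({y // y ∈ s} ⊕ {y // y ∈ sᶜ}) ≃ ({y // y ∈ s'} ⊕ {y // y ∈ s'ᶜ}) :=
    Equiv.sumCongr e₁ e₂
  let C : ({y // y ∈ s} ⊕ {y // y ∈ sᶜ}) ≃ X :=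
    (Equiv.sumCongr (Equiv.refl _) (Equiv.subtypeEquivRight (fun y => by
      simp [Finset.mem_compl]))).trans
      (Equiv.sumCompl (fun y : X => y ∈ s))
  let C' : ({y // y ∈ s'} ⊕ {y // y ∈ s'ᶜ}) ≃ X :=
    (Equiv.sumCongr (Equiv.refl _) (Equiv.subtypeEquivRight (fun y => by
      simp [Finset.mem_compl]))).trans
      (Equiv.sumCompl (fun y : X => y ∈ s'))
  refine ⟨(C.symm.trans E).trans C', ?_⟩
  intro i
  have hvi : v i ∈ s := Finset.mem_image_of_mem v (mem_univ _)
  have hC : C.symm (v i) = Sum.inl ⟨v i, hvi⟩ := by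
    apply C.injective
    rw [Equiv.apply_symm_apply]
    simp [C, Equiv.sumCompl_apply_inl]
  simp only [Equiv.trans_apply, hC]
  simp only [E, Equiv.sumCongr_apply, Sum.map_inl]
  have : e₁ ⟨v i, hvi⟩ = ⟨v' i, by exact Finset.mem_image_of_mem v' (mem_univ _)⟩ := by
    apply Subtype.ext
    exact hψv i hvi
  rw [this]
  simp [C', Equiv.sumCompl_apply_inl]

end Auxiliary

section Aux2

set_option linter.unusedSectionVars false

variable {Z : Type*} [Fintype Z]

lemma tv_mix_le {ι : Type*} (s : Finset ι) (c : ι → ℝ) (hc : ∀ a ∈ s, 0 ≤ c a)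
    (hcs : ∑ a ∈ s, c a = 1) (Q : ι → Z → ℝ) (R : Z → ℝ) :
    tv (fun z => ∑ a ∈ s, c a * Q a z) R ≤ ∑ a ∈ s, c a * tv (Q a) R := by
  unfold tv
  have h1 : ∀ z : Z, |(∑ a ∈ s, c a * Q a z) - R z| ≤ ∑ a ∈ s, c a * |Q a z - R z| := by
    intro z
    have h2 : (∑ a ∈ s, c a * Q a z) - R z = ∑ a ∈ s, c a * (Q a z - R z) := by
      simp only [mul_sub]
      rw [Finset.sum_sub_distrib, ← Finset.sum_mul, hcs, one_mul]
    rw [h2]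
    refine le_trans (Finset.abs_sum_le_sum_abs _ _) ?_
    apply Finset.sum_le_sum
    intro a ha
    rw [abs_mul, abs_of_nonneg (hc a ha)]
  calc (1/2) * ∑ z, |(∑ a ∈ s, c a * Q a z) - R z|
      ≤ (1/2) * ∑ z, ∑ a ∈ s, c a * |Q a z - R z| := by
        apply mul_le_mul_of_nonneg_left (Finset.sum_le_sum (fun z _ => h1 z)) (by norm_num)
    _ = ∑ a ∈ s, c a * ((1/2) * ∑ z, |Q a z - R z|) := by
        rw [Finset.sum_comm, Finset.mul_sum]
        apply Finset.sum_congr rfl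
        intro a _
        rw [← Finset.mul_sum]
        ring

lemma abs_tv_sub_tv_le (P Q R : Z → ℝ) : |tv P R - tv Q R| ≤ tv P Q := by
  unfold tv
  rw [← mul_sub, ← Finset.sum_sub_distrib, abs_mul]
  have h0 : |(1:ℝ)/2| = 1/2 := by norm_num
  rw [h0]
  apply mul_le_mul_of_nonneg_left ?_ (by norm_num : (0:ℝ) ≤ 1/2)
  refine le_trans (Finset.abs_sum_le_sum_abs _ _) ?_
  apply Finset.sum_le_sum
  intro z _
  have := abs_abs_sub_abs_le_abs_sub (P z - R z) (Q z - R z)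
  calc |(|P z - R z| - |Q z - R z|)| ≤ |(P z - R z) - (Q z - R z)| := this
    _ = |P z - Q z| := by ring_nf

variable {X : Type*} [Fintype X] [DecidableEq X]

/-- Averaging over all permutations: `(L:ℝ) * ∑_π w (π j) = L! * ∑ w`. -/
lemma perm_sum_eq (L : ℕ) (j : Fin L) (w : Fin L → ℝ) :
    (L:ℝ) * ∑ π : Equiv.Perm (Fin L), w (π j) = (Nat.factorial L : ℝ) * ∑ i, w i := by
  classical
  have hfib : ∑ π : Equiv.Perm (Fin L), w (π j)
      = ∑ i : Fin L, ∑ π ∈ univ.filter (fun π : Equiv.Perm (Fin L) => π j = i), w (π j) :=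
    (Finset.sum_fiberwise_of_maps_to (fun π _ => mem_univ (π j)) _).symm
  have hcount : ∀ i i' : Fin L,
      (univ.filter (fun π : Equiv.Perm (Fin L) => π j = i)).card
        = (univ.filter (fun π : Equiv.Perm (Fin L) => π j = i')).card := by
    intro i i'
    apply Finset.card_nbij (fun π => (Equiv.swap i i') * π)
    · intro π hπ
      rw [Finset.mem_coe, Finset.mem_filter] at hπ ⊢
      refine ⟨mem_univ _, ?_⟩
      rw [Equiv.Perm.mul_apply, hπ.2, Equiv.swap_apply_left]
    · intro π hπ π' hπ' h
      have := congrArg (fun ρ => (Equiv.swap i i')⁻¹ * ρ) h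
      simpa [← mul_assoc] using this
    · intro π hπ
      simp only [Set.mem_image]
      refine ⟨(Equiv.swap i i')⁻¹ * π, ?_, by group⟩
      simp only [Finset.coe_filter, Set.mem_setOf_eq, mem_univ, true_and] at hπ ⊢
      rw [Equiv.Perm.mul_apply, hπ, Equiv.swap_inv, Equiv.swap_apply_right]
  have htotal : ∑ i : Fin L, ((univ.filter (fun π : Equiv.Perm (Fin L) => π j = i)).card : ℝ)
      = (Nat.factorial L : ℝ) := by
    rw [← Nat.cast_sum]
    congr 1
    rw [← Finset.card_eq_sum_card_fiberwise (fun π _ => mem_univ (π j))]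
    simp [Fintype.card_perm]
  -- rewrite the fiber sums
  have hinner : ∀ i : Fin L, ∑ π ∈ univ.filter (fun π : Equiv.Perm (Fin L) => π j = i), w (π j)
      = ((univ.filter (fun π : Equiv.Perm (Fin L) => π j = i)).card : ℝ) * w i := by
    intro i
    rw [Finset.sum_congr rfl (fun π hπ => by rw [(Finset.mem_filter.mp hπ).2]),
      Finset.sum_const, nsmul_eq_mul]
  rw [hfib, Finset.sum_congr rfl (fun i _ => hinner i)]
  -- all fiber cardinalities are equal to card/L
  set C : ℝ := ((univ.filter (fun π : Equiv.Perm (Fin L) => π j = j)).card : ℝ) with hC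
  have hCeq : ∀ i : Fin L, ((univ.filter (fun π : Equiv.Perm (Fin L) => π j = i)).card : ℝ) = C := by
    intro i
    rw [hC]
    exact_mod_cast congrArg Nat.cast (hcount i j)
  rw [Finset.sum_congr rfl (fun i _ => by rw [hCeq i])]
  have hLC : (L:ℝ) * C = (Nat.factorial L : ℝ) := by
    rw [← htotal, Finset.sum_congr rfl (fun i _ => hCeq i), Finset.sum_const]
    simp [nsmul_eq_mul, mul_comm]
  rw [← Finset.mul_sum, ← hLC]
  ring

lemma sym_avg_le (L : ℕ) (hL : 0 < L) (PZX : X → Z → ℝ) (PZ : Z → ℝ)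
    (w : Fin L → ℝ) (hw : ∀ i, 0 ≤ w i) (hws : ∑ i, w i = 1) :
    ∑ u ∈ IT X L univ, tv (fun z => (L:ℝ)⁻¹ * ∑ i, PZX (u i) z) PZ
      ≤ ∑ u ∈ IT X L univ, tv (fun z => ∑ j, w j * PZX (u j) z) PZ := by
  classical
  have hfac : (0:ℝ) < (Nat.factorial L : ℝ) := by exact_mod_cast Nat.factorial_pos L
  have hLpos : (0:ℝ) < (L:ℝ) := by exact_mod_cast hL
  -- pointwise mixture bound
  have h1 : ∀ u : Fin L → X, tv (fun z => (L:ℝ)⁻¹ * ∑ i, PZX (u i) z) PZ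
      ≤ ∑ π : Equiv.Perm (Fin L), ((Nat.factorial L : ℝ))⁻¹ *
          tv (fun z => ∑ j, w (π j) * PZX (u j) z) PZ := by
    intro u
    have hmix := tv_mix_le (univ : Finset (Equiv.Perm (Fin L)))
      (fun _ => ((Nat.factorial L : ℝ))⁻¹)
      (fun _ _ => by positivity)
      (by
        rw [Finset.sum_const, nsmul_eq_mul, Finset.card_univ, Fintype.card_perm,
          Fintype.card_fin]
        field_simp)
      (fun π => fun z => ∑ j, w (π j) * PZX (u j) z) PZ
    have harg : (fun z => ∑ π : Equiv.Perm (Fin L), ((Nat.factorial L : ℝ))⁻¹ *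
        ∑ j, w (π j) * PZX (u j) z) = (fun z => (L:ℝ)⁻¹ * ∑ i, PZX (u i) z) := by
      funext z
      rw [← Finset.mul_sum, Finset.sum_comm]
      have hj : ∀ j : Fin L, ∑ π : Equiv.Perm (Fin L), w (π j) * PZX (u j) z
          = ((Nat.factorial L : ℝ) / L) * PZX (u j) z := by
        intro j
        rw [← Finset.sum_mul]
        congr 1
        have := perm_sum_eq L j w
        rw [hws, mul_one] at this
        field_simp
        linarith [this]
      rw [Finset.sum_congr rfl (fun j _ => hj j), ← Finset.mul_sum]
      field_simp
    rw [harg] at hmix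
    exact hmix
  -- reindexing: each permuted average has the same total over injective tuples
  have h2 : ∀ π : Equiv.Perm (Fin L),
      ∑ u ∈ IT X L univ, tv (fun z => ∑ j, w (π j) * PZX (u j) z) PZ
        = ∑ u ∈ IT X L univ, tv (fun z => ∑ j, w j * PZX (u j) z) PZ := by
    intro π
    refine Finset.sum_nbij' (i := fun u => u ∘ π.symm) (j := fun u => u ∘ π) ?_ ?_ ?_ ?_ ?_
    · intro u hu
      rw [mem_IT] at hu ⊢
      exact ⟨hu.1.comp π.symm.injective, fun i => hu.2 _⟩
    · intro u hu
      rw [mem_IT] at hu ⊢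
      exact ⟨hu.1.comp π.injective, fun i => hu.2 _⟩
    · intro u hu
      funext i
      simp
    · intro u hu
      funext i
      simp
    · intro u hu
      congr 1
      funext z
      rw [← Equiv.sum_comp π (fun j => w j * PZX ((u ∘ π.symm) j) z)]
      apply Finset.sum_congr rfl
      intro i _
      simp
  calc ∑ u ∈ IT X L univ, tv (fun z => (L:ℝ)⁻¹ * ∑ i, PZX (u i) z) PZ
      ≤ ∑ u ∈ IT X L univ, ∑ π : Equiv.Perm (Fin L), ((Nat.factorial L : ℝ))⁻¹ *
          tv (fun z => ∑ j, w (π j) * PZX (u j) z) PZ :=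
        Finset.sum_le_sum (fun u _ => h1 u)
    _ = ((Nat.factorial L : ℝ))⁻¹ * ∑ π : Equiv.Perm (Fin L),
          ∑ u ∈ IT X L univ, tv (fun z => ∑ j, w (π j) * PZX (u j) z) PZ := by
        rw [Finset.sum_comm, Finset.mul_sum]
        apply Finset.sum_congr rfl
        intro π _
        rw [← Finset.mul_sum]
    _ = ((Nat.factorial L : ℝ))⁻¹ * ∑ π : Equiv.Perm (Fin L),
          ∑ u ∈ IT X L univ, tv (fun z => ∑ j, w j * PZX (u j) z) PZ := by
        rw [Finset.sum_congr rfl (fun π _ => h2 π)]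
    _ = ∑ u ∈ IT X L univ, tv (fun z => ∑ j, w j * PZX (u j) z) PZ := by
        rw [Finset.sum_const, Finset.card_univ, Fintype.card_perm, Fintype.card_fin,
          nsmul_eq_mul]
        rw [← mul_assoc, inv_mul_cancel₀ (ne_of_gt hfac), one_mul]

/-- The canonical equality pattern of a tuple. -/
def pat {L : ℕ} (v : Fin L → X) : Fin L → Fin L :=
  fun j => (univ.filter (fun i => v i = v j)).min' ⟨j, by simp⟩

lemma pat_spec {L : ℕ} (v : Fin L → X) (j : Fin L) : v (pat v j) = v j := by
  have := Finset.min'_mem (univ.filter (fun i => v i = v j)) ⟨j, by simp⟩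
  rw [Finset.mem_filter] at this
  exact this.2

lemma pat_iff {L : ℕ} (v : Fin L → X) (i j : Fin L) :
    v i = v j ↔ pat v i = pat v j := by
  constructor
  · intro h
    unfold pat
    congr 2
    funext k
    rw [h]
  · intro h
    have h1 := pat_spec v i
    have h2 := pat_spec v j
    rw [← h1, ← h2, h]

lemma pat_comp {L : ℕ} (u : Fin L → X) (hu : Function.Injective u) (v : Fin L → X) :
    pat (u ∘ pat v) = pat v := by
  funext j
  show (univ.filter (fun i => u (pat v i) = u (pat v j))).min' _ = pat v j
  have hset : univ.filter (fun i => u (pat v i) = u (pat v j))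
      = univ.filter (fun i => v i = v j) := by
    ext i
    simp only [Finset.mem_filter, mem_univ, true_and]
    exact ⟨fun h => (pat_iff v i j).mpr (hu h), fun h => congrArg u ((pat_iff v i j).mp h)⟩
  simp only [hset]
  rfl

set_option maxHeartbeats 1000000 in
lemma inj_avg_le_iid (L : ℕ) (hL : 0 < L) (hLX : L ≤ Fintype.card X)
    (PZX : X → Z → ℝ) (PZ : Z → ℝ) :
    ((IT X L univ).card : ℝ)⁻¹ * ∑ u ∈ IT X L univ, tv (fun z => (L:ℝ)⁻¹ * ∑ i, PZX (u i) z) PZ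
      ≤ ((Fintype.card X : ℝ) ^ L)⁻¹ *
        ∑ v : Fin L → X, tv (fun z => (L:ℝ)⁻¹ * ∑ i, PZX (v i) z) PZ := by
  classical
  set f : (Fin L → X) → ℝ := fun v => tv (fun z => (L:ℝ)⁻¹ * ∑ i, PZX (v i) z) PZ with hf
  set I := IT X L univ with hI
  have hNI : 0 < I.card := by
    rw [hI, IT_card]
    have := Nat.descFactorial_eq_zero_iff_lt (n := Fintype.card X) (k := L)
    rw [Finset.card_univ]
    omega
  have hNIr : (0:ℝ) < (I.card : ℝ) := by exact_mod_cast hNI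
  have hNpow : (0:ℝ) < ((Fintype.card X : ℝ) ^ L) := by
    have : 0 < Fintype.card X := lt_of_lt_of_le hL hLX
    positivity
  -- main fiberwise inequality
  have main : ∀ ρ ∈ (univ : Finset (Fin L → X)).image pat,
      ((univ.filter (fun v : Fin L → X => pat v = ρ)).card : ℝ) * ∑ u ∈ I, f u
        ≤ (I.card : ℝ) * ∑ v ∈ univ.filter (fun v : Fin L → X => pat v = ρ), f v := by
    intro ρ hρ
    obtain ⟨v₀, _, hv₀⟩ := Finset.mem_image.mp hρ
    set fib := univ.filter (fun v : Fin L → X => pat v = ρ) with hfib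
    -- weights
    set cnt : Fin L → ℕ := fun j => (univ.filter (fun i => ρ i = j)).card with hcnt
    set w : Fin L → ℝ := fun j => (cnt j : ℝ) / L with hw
    have hw0 : ∀ j, 0 ≤ w j := fun j => by positivity
    have hws : ∑ j, w j = 1 := by
      rw [hw]
      simp only
      rw [← Finset.sum_div, ← Nat.cast_sum]
      rw [← Finset.card_eq_sum_card_fiberwise (fun (i : Fin L) _ => mem_univ (ρ i))]
      rw [Finset.card_univ, Fintype.card_fin]
      field_simp
    -- maps_to
    have hmaps : ∀ u ∈ I, u ∘ ρ ∈ fib := by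
      intro u hu
      rw [hI, mem_IT] at hu
      rw [hfib, Finset.mem_filter]
      refine ⟨mem_univ _, ?_⟩
      rw [← hv₀, pat_comp u hu.1 v₀]
    -- value of f on composed tuples
    have hval : ∀ u ∈ I, f (u ∘ ρ) = tv (fun z => ∑ j, w j * PZX (u j) z) PZ := by
      intro u _
      simp only [hf]
      congr 1
      funext z
      have hsplit : ∑ i, PZX ((u ∘ ρ) i) z
          = ∑ j, (cnt j : ℝ) * PZX (u j) z := by
        rw [← Finset.sum_fiberwise_of_maps_to (fun (i : Fin L) _ => mem_univ (ρ i))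
          (fun i => PZX ((u ∘ ρ) i) z)]
        apply Finset.sum_congr rfl
        intro j _
        rw [Finset.sum_congr rfl (fun i hi => by
          rw [Function.comp_apply, (Finset.mem_filter.mp hi).2]), Finset.sum_const,
          nsmul_eq_mul]
      rw [hsplit, Finset.mul_sum]
      apply Finset.sum_congr rfl
      intro j _
      rw [hw]
      simp only
      field_simp
    -- counts are constant on the fiber
    have hcount : ∀ v ∈ fib, ∀ v' ∈ fib,
        (I.filter (fun u => u ∘ ρ = v)).card = (I.filter (fun u => u ∘ ρ = v')).card := by
      intro v hv v' hv'
      rw [hfib, Finset.mem_filter] at hv hv'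
      have hpatv : pat v = pat v' := by rw [hv.2, hv'.2]
      have hpp : ∀ i j, v i = v j ↔ v' i = v' j := by
        intro i j
        rw [pat_iff v, pat_iff v', hpatv]
      obtain ⟨σ, hσ⟩ := exists_perm_comp v v' hpp
      apply Finset.card_nbij (fun u => σ ∘ u)
      · intro u hu
        rw [Finset.mem_coe, Finset.mem_filter] at hu ⊢
        obtain ⟨hu1, hu2⟩ := hu
        rw [hI, mem_IT] at hu1 ⊢
        refine ⟨⟨σ.injective.comp hu1.1, fun i => mem_univ _⟩, ?_⟩
        funext i
        have h1 : u (ρ i) = v i := congrFun hu2 i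
        show σ (u (ρ i)) = v' i
        rw [h1]
        exact hσ i
      · intro u hu u' hu' h
        funext i
        have := congrFun h i
        simp only [Function.comp_apply] at this
        exact σ.injective this
      · intro u hu
        simp only [Finset.coe_filter, Set.mem_setOf_eq] at hu
        obtain ⟨hu1, hu2⟩ := hu
        refine ⟨σ.symm ∘ u, ?_, ?_⟩
        · simp only [Finset.coe_filter, Set.mem_setOf_eq]
          constructor
          · rw [hI, mem_IT] at hu1 ⊢
            exact ⟨σ.symm.injective.comp hu1.1, fun i => mem_univ _⟩
          · funext i
            have h1 : u (ρ i) = v' i := congrFun hu2 i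
            show σ.symm (u (ρ i)) = v i
            rw [h1, ← hσ i]
            exact σ.symm_apply_apply _
        · funext i
          show σ (σ.symm (u i)) = u i
          exact σ.apply_symm_apply _
    -- total count over the fiber
    have hv₀fib : v₀ ∈ fib := by
      rw [hfib, Finset.mem_filter]
      exact ⟨mem_univ _, hv₀⟩
    have htot : ∑ v ∈ fib, (I.filter (fun u => u ∘ ρ = v)).card = I.card :=
      (Finset.card_eq_sum_card_fiberwise hmaps).symm
    set n₀ : ℕ := (I.filter (fun u => u ∘ ρ = v₀)).card with hn₀
    have hntot : fib.card * n₀ = I.card := by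
      rw [← htot, Finset.sum_congr rfl (fun v hv => hcount v hv v₀ hv₀fib), Finset.sum_const,
        smul_eq_mul]
    have hsum1 : ∑ u ∈ I, f (u ∘ ρ) = (n₀ : ℝ) * ∑ v ∈ fib, f v := by
      rw [← Finset.sum_fiberwise_of_maps_to hmaps (fun u => f (u ∘ ρ)), Finset.mul_sum]
      apply Finset.sum_congr rfl
      intro v hv
      have hinner : ∀ u ∈ I.filter (fun u => u ∘ ρ = v), f (u ∘ ρ) = f v := by
        intro u hu
        rw [(Finset.mem_filter.mp hu).2]
      rw [Finset.sum_congr rfl hinner, Finset.sum_const, nsmul_eq_mul,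
        hcount v hv v₀ hv₀fib, ← hn₀]
    have hA : ∑ u ∈ I, f u ≤ ∑ u ∈ I, f (u ∘ ρ) := by
      have hsym := sym_avg_le L hL PZX PZ w hw0 hws
      rw [← hI] at hsym
      refine le_trans hsym (le_of_eq ?_)
      exact Finset.sum_congr rfl (fun u hu => (hval u hu).symm)
    calc ((fib.card : ℝ)) * ∑ u ∈ I, f u
        ≤ (fib.card : ℝ) * ∑ u ∈ I, f (u ∘ ρ) :=
          mul_le_mul_of_nonneg_left hA (by positivity)
      _ = (fib.card : ℝ) * ((n₀ : ℝ) * ∑ v ∈ fib, f v) := by rw [hsum1]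
      _ = ((I.card : ℝ)) * ∑ v ∈ fib, f v := by
          rw [← mul_assoc, ← Nat.cast_mul, hntot]
  -- assemble over all patterns
  have hsplitall : ∑ v : Fin L → X, f v
      = ∑ ρ ∈ (univ : Finset (Fin L → X)).image pat,
          ∑ v ∈ univ.filter (fun v : Fin L → X => pat v = ρ), f v :=
    (Finset.sum_fiberwise_of_maps_to
      (fun v _ => Finset.mem_image_of_mem pat (mem_univ v)) f).symm
  have hcardsplit : ∑ ρ ∈ (univ : Finset (Fin L → X)).image pat,
      ((univ.filter (fun v : Fin L → X => pat v = ρ)).card : ℝ)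
        = ((Fintype.card X : ℝ)) ^ L := by
    rw [← Nat.cast_sum,
      ← Finset.card_eq_sum_card_fiberwise
        (fun (v : Fin L → X) (_ : v ∈ univ) => Finset.mem_image_of_mem pat (mem_univ v))]
    rw [Finset.card_univ]
    rw [Fintype.card_fun]
    push_cast
    simp
  have hmain : ((Fintype.card X : ℝ)) ^ L * ∑ u ∈ I, f u ≤ (I.card : ℝ) * ∑ v : Fin L → X, f v := by
    rw [hsplitall, ← hcardsplit, Finset.sum_mul, Finset.mul_sum]
    exact Finset.sum_le_sum main
  rw [inv_mul_eq_div, inv_mul_eq_div, div_le_div_iff₀ hNIr hNpow]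
  linarith [hmain]

end Aux2

set_option maxHeartbeats 1600000 in
/-- strong privacy amplification, existence form: if `|X| = L·|K|`
with `L` a positive integer, then there exists a balanced function `g : X → K`
(each preimage of size `L`) such that
`max_k d(P_{Z|g⁻¹(k)}, P_Z) ≤ μ + √(log(|K|+1)/(2L))`,
where `μ = E[d(P_{Z|𝒜}, P_Z)]` for an i.i.d. uniform codebook `𝒜` of size `L`. -/
theorem strong_privacy_amplification_exists
    {X K Z : Type*} [Fintype X] [Fintype K] [Fintype Z]
    [DecidableEq X] [DecidableEq K]
    (L : ℕ) (hL : 0 < L) (hcard : Fintype.card X = L * Fintype.card K)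
    (PZX : X → Z → ℝ)
    (hpos : ∀ x z, 0 ≤ PZX x z) (hsum : ∀ x, ∑ z, PZX x z = 1)
    (PZ : Z → ℝ) (hPZ : ∀ z, PZ z = (Fintype.card X : ℝ)⁻¹ * ∑ x, PZX x z)
    (μ : ℝ)
    (hμ : μ = ((Fintype.card X : ℝ) ^ L)⁻¹ *
        ∑ v : Fin L → X, tv (fun z => (L : ℝ)⁻¹ * ∑ i, PZX (v i) z) PZ) :
    ∃ g : X → K,
      (∀ k, (univ.filter (fun x => g x = k)).card = L) ∧
      (⨆ k, tv (fun z =>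
          (L : ℝ)⁻¹ * ∑ x ∈ univ.filter (fun x => g x = k), PZX x z) PZ)
        ≤ μ + Real.sqrt (Real.log ((Fintype.card K : ℝ) + 1) / (2 * L)) := by
  classical
  rcases isEmpty_or_nonempty K with hK | hK
  · -- K empty forces X empty
    have hX0 : Fintype.card X = 0 := by simp [hcard, Fintype.card_eq_zero]
    have hXempty : IsEmpty X := Fintype.card_eq_zero_iff.mp hX0
    refine ⟨fun x => (hXempty.elim x), fun k => (hK.elim k), ?_⟩
    have hsup : (⨆ k : K, tv (fun z =>
        (L : ℝ)⁻¹ * ∑ x ∈ univ.filter (fun x => (hXempty.elim x : K) = k), PZX x z) PZ) = 0 :=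
      Real.iSup_of_isEmpty _
    rw [hsup]
    have hμ0 : μ = 0 := by
      rw [hμ, hX0]
      simp [zero_pow hL.ne']
    rw [hμ0, zero_add]
    exact Real.sqrt_nonneg _
  -- main case
  have hm1 : 1 ≤ Fintype.card K := Fintype.card_pos
  set m : ℕ := Fintype.card K with hm
  have hLX : L ≤ Fintype.card X := by
    rw [hcard]
    exact Nat.le_mul_of_pos_right L (by omega)
  have hXpos : 0 < Fintype.card X := by omega
  set f : (Fin L → X) → ℝ := fun v => tv (fun z => (L:ℝ)⁻¹ * ∑ i, PZX (v i) z) PZ with hf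
  set I := IT X L (univ : Finset X) with hI
  have hIuniv : L ≤ (univ : Finset X).card := by rw [Finset.card_univ]; exact hLX
  have hNI : 0 < I.card := by
    rw [hI, IT_card, Finset.card_univ]
    have := Nat.descFactorial_eq_zero_iff_lt (n := Fintype.card X) (k := L)
    omega
  have hNIr : (0:ℝ) < (I.card : ℝ) := by exact_mod_cast hNI
  set t : ℝ := Real.sqrt (Real.log ((m : ℝ) + 1) / (2 * L)) with ht
  have hlog : 0 < Real.log ((m:ℝ) + 1) := by
    apply Real.log_pos
    have : (1:ℝ) ≤ (m:ℝ) := by exact_mod_cast hm1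
    linarith
  have hLr : (0:ℝ) < (L:ℝ) := by exact_mod_cast hL
  have htpos : 0 < t := by
    rw [ht]
    apply Real.sqrt_pos.mpr
    positivity
  have ht2 : t ^ 2 = Real.log ((m:ℝ) + 1) / (2 * L) := by
    rw [ht, Real.sq_sqrt (by positivity)]
  set l : ℝ := 4 * L * t with hl
  have hlpos : 0 < l := by rw [hl]; positivity
  -- symmetry of f
  have hfsym : ∀ (v : Fin L → X) (π : Equiv.Perm (Fin L)), f (v ∘ π) = f v := by
    intro v π
    simp only [hf]
    congr 1
    funext z
    congr 1
    exact Equiv.sum_comp π (fun i => PZX (v i) z)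
  -- Lipschitz property of f
  have hflip : ∀ (v : Fin L → X) (i : Fin L) (x : X),
      |f v - f (Function.update v i x)| ≤ 1 / L := by
    intro v i x
    refine le_trans (abs_tv_sub_tv_le _ _ _) ?_
    unfold tv
    have hpt : ∀ z, |(L:ℝ)⁻¹ * ∑ j, PZX (v j) z - (L:ℝ)⁻¹ * ∑ j, PZX (Function.update v i x j) z|
        = (L:ℝ)⁻¹ * |PZX (v i) z - PZX x z| := by
      intro z
      have h1 : ∑ j, PZX (Function.update v i x j) z
          = PZX x z + ∑ j ∈ univ.erase i, PZX (v j) z := by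
        rw [← Finset.add_sum_erase _ (fun j => PZX (Function.update v i x j) z) (mem_univ i)]
        congr 1
        · rw [Function.update_self]
        · apply Finset.sum_congr rfl
          intro j hj
          rw [Function.update_of_ne (Finset.ne_of_mem_erase hj)]
      have h2 : ∑ j, PZX (v j) z = PZX (v i) z + ∑ j ∈ univ.erase i, PZX (v j) z := by
        rw [← Finset.add_sum_erase _ (fun j => PZX (v j) z) (mem_univ i)]
      rw [h1, h2, ← mul_sub, abs_mul, abs_of_nonneg (by positivity : (0:ℝ) ≤ (L:ℝ)⁻¹)]
      congr 1
      ring_nf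
    calc (1/2) * ∑ z, |(fun z => (L:ℝ)⁻¹ * ∑ j, PZX (v j) z) z
            - (fun z => (L:ℝ)⁻¹ * ∑ j, PZX (Function.update v i x j) z) z|
        = (1/2) * ∑ z, (L:ℝ)⁻¹ * |PZX (v i) z - PZX x z| := by
          congr 1
          exact Finset.sum_congr rfl (fun z _ => hpt z)
      _ ≤ (1/2) * ∑ z, (L:ℝ)⁻¹ * (PZX (v i) z + PZX x z) := by
          apply mul_le_mul_of_nonneg_left ?_ (by norm_num)
          apply Finset.sum_le_sum
          intro z _
          apply mul_le_mul_of_nonneg_left ?_ (by positivity)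
          refine le_trans (abs_sub _ _) ?_
          rw [abs_of_nonneg (hpos _ _), abs_of_nonneg (hpos _ _)]
      _ = 1 / L := by
          rw [← Finset.mul_sum, Finset.sum_add_distrib, hsum, hsum]
          field_simp
          norm_num
  -- expected value over injective tuples is at most μ
  set μ' : ℝ := ((I.card : ℝ))⁻¹ * ∑ v ∈ I, f v with hμ'
  have hμ'le : μ' ≤ μ := by
    rw [hμ', hμ, hf, hI]
    exact inj_avg_le_iid L hL hLX PZX PZ
  -- Chernoff bound for the bad set of injective tuples
  set badI := I.filter (fun v => μ + t < f v) with hbadI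
  have hchern : ((m:ℝ) + 1) * badI.card ≤ I.card := by
    have hmgf := mgf_IT (1/L) l (by positivity) L univ hIuniv f hfsym hflip
    rw [← hI, ← hμ'] at hmgf
    have hexp : (L:ℝ) * (l ^ 2 * (1/L) ^ 2 / 8) = Real.log ((m:ℝ) + 1) := by
      rw [hl]
      field_simp
      rw [ht2]
      field_simp
      ring
    rw [hexp] at hmgf
    have hstep1 : (badI.card : ℝ) ≤ ∑ v ∈ badI, Real.exp (l * (f v - μ - t)) := by
      rw [Finset.card_eq_sum_ones badI]
      push_cast
      apply Finset.sum_le_sum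
      intro v hv
      rw [hbadI, Finset.mem_filter] at hv
      apply Real.one_le_exp
      have : μ + t ≤ f v := le_of_lt hv.2
      nlinarith [hlpos]
    have hstep2 : ∑ v ∈ badI, Real.exp (l * (f v - μ - t))
        ≤ ∑ v ∈ I, Real.exp (l * (f v - μ - t)) := by
      apply Finset.sum_le_sum_of_subset_of_nonneg (Finset.filter_subset _ _)
      intro v _ _
      exact Real.exp_nonneg _
    have hstep3 : ∑ v ∈ I, Real.exp (l * (f v - μ - t))
        = Real.exp (l * (μ' - μ - t)) * ∑ v ∈ I, Real.exp (l * (f v - μ')) := by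
      rw [Finset.mul_sum]
      apply Finset.sum_congr rfl
      intro v _
      rw [← Real.exp_add]
      congr 1
      ring
    have hstep4 : Real.exp (l * (μ' - μ - t)) * ∑ v ∈ I, Real.exp (l * (f v - μ'))
        ≤ Real.exp (-(l * t)) * ((I.card : ℝ) * Real.exp (Real.log ((m:ℝ) + 1))) := by
      apply mul_le_mul ?_ hmgf ?_ (Real.exp_nonneg _)
      · apply Real.exp_le_exp.mpr
        nlinarith [hlpos.le, hμ'le]
      · apply Finset.sum_nonneg
        intro v _
        exact Real.exp_nonneg _
    have hstep5 : Real.exp (-(l * t)) * ((I.card : ℝ) * Real.exp (Real.log ((m:ℝ) + 1)))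
        = (I.card : ℝ) * Real.exp (Real.log ((m:ℝ) + 1) - l * t) := by
      rw [Real.exp_sub, Real.exp_neg]
      field_simp
    have hlt : l * t = 2 * Real.log ((m:ℝ) + 1) := by
      rw [hl]
      have : 4 * (L:ℝ) * t * t = 4 * L * t^2 := by ring
      rw [this, ht2]
      field_simp
      ring
    have hstep6 : Real.exp (Real.log ((m:ℝ) + 1) - l * t) = ((m:ℝ) + 1)⁻¹ := by
      rw [hlt]
      have : Real.log ((m:ℝ) + 1) - 2 * Real.log ((m:ℝ) + 1) = -(Real.log ((m:ℝ) + 1)) := by ring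
      rw [this, Real.exp_neg, Real.exp_log (by positivity)]
    have hm1r : (0:ℝ) < (m:ℝ) + 1 := by positivity
    have : (badI.card : ℝ) ≤ (I.card : ℝ) * ((m:ℝ) + 1)⁻¹ := by
      calc (badI.card : ℝ) ≤ ∑ v ∈ badI, Real.exp (l * (f v - μ - t)) := hstep1
        _ ≤ ∑ v ∈ I, Real.exp (l * (f v - μ - t)) := hstep2
        _ = Real.exp (l * (μ' - μ - t)) * ∑ v ∈ I, Real.exp (l * (f v - μ')) := hstep3
        _ ≤ Real.exp (-(l * t)) * ((I.card : ℝ) * Real.exp (Real.log ((m:ℝ) + 1))) := hstep4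
        _ = (I.card : ℝ) * Real.exp (Real.log ((m:ℝ) + 1) - l * t) := hstep5
        _ = (I.card : ℝ) * ((m:ℝ) + 1)⁻¹ := by rw [hstep6]
    calc ((m:ℝ) + 1) * badI.card ≤ ((m:ℝ) + 1) * ((I.card : ℝ) * ((m:ℝ) + 1)⁻¹) :=
          mul_le_mul_of_nonneg_left this hm1r.le
      _ = (I.card : ℝ) := by field_simp
  -- transfer to balanced functions via equivalences (K × Fin L) ≃ X
  have hcardD : Fintype.card (K × Fin L) = Fintype.card X := by
    rw [Fintype.card_prod, Fintype.card_fin, hcard, mul_comm]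
  have hED : Nonempty ((K × Fin L) ≃ X) := ⟨Fintype.equivOfCardEq hcardD⟩
  have hE0 : 0 < Fintype.card ((K × Fin L) ≃ X) := Fintype.card_pos
  set E := (univ : Finset ((K × Fin L) ≃ X)) with hE
  set res : K → ((K × Fin L) ≃ X) → (Fin L → X) := fun k u i => u (k, i) with hres
  have hres_mem : ∀ k u, res k u ∈ I := by
    intro k u
    rw [hI, mem_IT]
    refine ⟨?_, fun i => mem_univ _⟩
    intro i j hij
    have := u.injective hij
    simpa using this
  obtain ⟨v₀, hv₀⟩ := IT_nonempty (X := X) (n := L) hIuniv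
  rw [← hI] at hv₀
  have hfib_eq : ∀ (k : K), ∀ v ∈ I,
      (E.filter (fun u => res k u = v)).card = (E.filter (fun u => res k u = v₀)).card := by
    intro k v hv
    have hvI := hv
    rw [hI, mem_IT] at hvI
    have hv₀I := hv₀
    rw [hI, mem_IT] at hv₀I
    have hpat : ∀ i j, v i = v j ↔ v₀ i = v₀ j := by
      intro i j
      rw [hvI.1.eq_iff, hv₀I.1.eq_iff]
    obtain ⟨σ, hσ⟩ := exists_perm_comp v v₀ hpat
    apply Finset.card_nbij (fun u => u.trans σ)
    · intro u hu
      rw [Finset.mem_coe, Finset.mem_filter] at hu ⊢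
      refine ⟨mem_univ _, ?_⟩
      funext i
      show σ (u (k, i)) = v₀ i
      have : u (k, i) = v i := congrFun hu.2 i
      rw [this]
      exact hσ i
    · intro u _ u' _ h
      have h2 := congrArg (fun e : (K × Fin L) ≃ X => e.trans σ.symm) h
      simpa [Equiv.trans_assoc] using h2
    · intro u hu
      simp only [Finset.coe_filter, Set.mem_setOf_eq] at hu
      refine ⟨u.trans σ.symm, ?_, ?_⟩
      · simp only [Finset.coe_filter, Set.mem_setOf_eq]
        refine ⟨mem_univ _, ?_⟩
        funext i
        show σ.symm (u (k, i)) = v i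
        have : u (k, i) = v₀ i := congrFun hu.2 i
        rw [this, ← hσ i, σ.symm_apply_apply]
      · apply Equiv.ext
        intro d
        show σ (σ.symm (u d)) = u d
        exact σ.apply_symm_apply _
  have hE0r : (0:ℝ) < (E.card : ℝ) := by
    rw [hE, Finset.card_univ]
    exact_mod_cast hE0
  have hm1r : (0:ℝ) < (m:ℝ) + 1 := by positivity
  -- per-key bad sets
  have hBk : ∀ k : K, ((E.filter (fun u => μ + t < f (res k u))).card : ℝ)
      ≤ (E.card : ℝ) / ((m:ℝ) + 1) := by
    intro k
    have hEcard : E.card = I.card * (E.filter (fun u => res k u = v₀)).card := by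
      rw [Finset.card_eq_sum_card_fiberwise (fun u (_ : u ∈ E) => hres_mem k u),
        Finset.sum_congr rfl (fun v hv => hfib_eq k v hv), Finset.sum_const, smul_eq_mul]
    have hmapsto : ∀ u ∈ E.filter (fun u => μ + t < f (res k u)), res k u ∈ badI := by
      intro u hu
      rw [Finset.mem_filter] at hu
      rw [hbadI, Finset.mem_filter]
      exact ⟨hres_mem k u, hu.2⟩
    have hBkcard : (E.filter (fun u => μ + t < f (res k u))).card
        = badI.card * (E.filter (fun u => res k u = v₀)).card := by
      rw [Finset.card_eq_sum_card_fiberwise hmapsto]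
      have hffib : ∀ v ∈ badI,
          ((E.filter (fun u => μ + t < f (res k u))).filter (fun u => res k u = v)).card
            = (E.filter (fun u => res k u = v₀)).card := by
        intro v hv
        have hveq : (E.filter (fun u => μ + t < f (res k u))).filter (fun u => res k u = v)
            = E.filter (fun u => res k u = v) := by
          ext u
          simp only [Finset.mem_filter]
          constructor
          · rintro ⟨⟨h1, _⟩, h3⟩
            exact ⟨h1, h3⟩
          · rintro ⟨h1, h3⟩
            refine ⟨⟨h1, ?_⟩, h3⟩
            rw [h3]
            exact (Finset.mem_filter.mp hv).2
        rw [hveq]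
        exact hfib_eq k v (Finset.mem_of_mem_filter v hv)
      rw [Finset.sum_congr rfl hffib, Finset.sum_const, smul_eq_mul]
    rw [le_div_iff₀ hm1r, hBkcard, hEcard]
    push_cast
    calc ((badI.card : ℝ) * ((E.filter (fun u => res k u = v₀)).card : ℝ)) * ((m:ℝ) + 1)
        = (((m:ℝ) + 1) * (badI.card : ℝ)) * ((E.filter (fun u => res k u = v₀)).card : ℝ) := by
          ring
      _ ≤ (I.card : ℝ) * ((E.filter (fun u => res k u = v₀)).card : ℝ) :=
          mul_le_mul_of_nonneg_right hchern (Nat.cast_nonneg _)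
  -- union bound
  set BadAll := E.filter (fun u => ∃ k, μ + t < f (res k u)) with hBadAll
  have hsub : BadAll ⊆ univ.biUnion (fun k => E.filter (fun u => μ + t < f (res k u))) := by
    intro u hu
    rw [hBadAll, Finset.mem_filter] at hu
    obtain ⟨_, k, hk⟩ := hu
    exact Finset.mem_biUnion.mpr ⟨k, mem_univ _, Finset.mem_filter.mpr ⟨mem_univ _, hk⟩⟩
  have hBadlt : BadAll.card < E.card := by
    have h1 : (BadAll.card : ℝ) ≤ ∑ k : K, ((E.filter (fun u => μ + t < f (res k u))).card : ℝ) := by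
      rw [← Nat.cast_sum]
      exact_mod_cast le_trans (Finset.card_le_card hsub) Finset.card_biUnion_le
    have h2 : ∑ k : K, ((E.filter (fun u => μ + t < f (res k u))).card : ℝ)
        ≤ (m : ℝ) * ((E.card : ℝ) / ((m:ℝ) + 1)) := by
      refine le_trans (Finset.sum_le_sum (fun k _ => hBk k)) ?_
      rw [Finset.sum_const, Finset.card_univ, ← hm, nsmul_eq_mul]
    have h3 : (m : ℝ) * ((E.card : ℝ) / ((m:ℝ) + 1)) < (E.card : ℝ) := by
      rw [div_eq_mul_inv]
      rw [show (m:ℝ) * ((E.card : ℝ) * ((m:ℝ) + 1)⁻¹) = ((m:ℝ) / ((m:ℝ)+1)) * E.card by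
        field_simp]
      have : (m:ℝ) / ((m:ℝ) + 1) < 1 := by
        rw [div_lt_one hm1r]
        linarith
      nlinarith [hE0r]
    exact_mod_cast lt_of_le_of_lt (le_trans h1 h2) h3
  have hBadne : BadAll ≠ E := fun h => absurd (congrArg Finset.card h) (Nat.ne_of_lt hBadlt)
  have hexu : ∃ u : (K × Fin L) ≃ X, u ∉ BadAll := by
    by_contra h
    push_neg at h
    apply hBadne
    apply Finset.eq_univ_iff_forall.mpr h
  obtain ⟨u, hu⟩ := hexu
  have hgood : ∀ k : K, f (res k u) ≤ μ + t := by
    intro k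
    by_contra h
    push_neg at h
    exact hu (Finset.mem_filter.mpr ⟨mem_univ _, ⟨k, h⟩⟩)
  -- construct g
  refine ⟨fun x => (u.symm x).1, ?_, ?_⟩
  · intro k
    have hpre : univ.filter (fun x => (u.symm x).1 = k)
        = Finset.image (fun i => u (k, i)) univ := by
      ext x
      simp only [Finset.mem_filter, mem_univ, true_and, Finset.mem_image]
      constructor
      · intro h
        refine ⟨(u.symm x).2, ?_⟩
        have hx : ((k, (u.symm x).2) : K × Fin L) = u.symm x := by
          rw [← h]
        rw [hx, u.apply_symm_apply]
      · rintro ⟨i, rfl⟩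
        rw [u.symm_apply_apply]
    rw [hpre, Finset.card_image_of_injective _ (fun i j hij => by simpa using u.injective hij)]
    simp
  · apply ciSup_le
    intro k
    have hpre : univ.filter (fun x => (u.symm x).1 = k)
        = Finset.image (fun i => u (k, i)) univ := by
      ext x
      simp only [Finset.mem_filter, mem_univ, true_and, Finset.mem_image]
      constructor
      · intro h
        refine ⟨(u.symm x).2, ?_⟩
        have hx : ((k, (u.symm x).2) : K × Fin L) = u.symm x := by
          rw [← h]
        rw [hx, u.apply_symm_apply]
      · rintro ⟨i, rfl⟩
        rw [u.symm_apply_apply]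
    have heq : tv (fun z => (L : ℝ)⁻¹ * ∑ x ∈ univ.filter (fun x => (u.symm x).1 = k), PZX x z) PZ
        = f (res k u) := by
      simp only [hf]
      congr 1
      funext z
      congr 1
      rw [hpre, Finset.sum_image (fun i _ j _ hij => by simpa using u.injective hij)]
    rw [heq]
    exact hgood k

end
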